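/- For a prime p ≥ 5 and a p-integral rational α with {α}_p ≥ 1, the truncated hypergeometric sum ∑_{k=0}^{p-1} (α)_k (1-α)_k / (k!)^2 ≡ (-1)^{{α}_p - 1} (mod p^2). -/

import Mathlib

open Polynomial Finset

/-- `U k = ∏_{i<k} (X+i)(1-X+i)` over `ℤ`. -/
noncomputable def Upoly (k : ℕ) : Polynomial ℤ :=
  ∏ i ∈ Finset.range k, ((X + (i : Polynomial ℤ)) * (1 - X + (i : Polynomial ℤ)))

lemma Upoly_zero : Upoly 0 = 1 := by simp [Upoly]

lemma Upoly_succ (k : ℕ) :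
    Upoly (k+1) = Upoly k * ((X + (k : Polynomial ℤ)) * (1 - X + (k : Polynomial ℤ))) := by
  simp [Upoly, Finset.prod_range_succ]

lemma Upoly_comp_add (k : ℕ) :
    ((k : Polynomial ℤ) - X) * (Upoly k).comp (X + 1) = -(X + (k : Polynomial ℤ)) * Upoly k := by
  induction k with
  | zero => simp [Upoly_zero]
  | succ k ih =>
      rw [Upoly_succ]
      simp only [mul_comp, add_comp, sub_comp, one_comp, X_comp, natCast_comp, Nat.cast_add,
        Nat.cast_one]
      linear_combination (((k : Polynomial ℤ) + 1 - X) * (X + 1 + (k : Polynomial ℤ))) * ih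

lemma Upoly_comp_sub (k : ℕ) :
    (X + (k : Polynomial ℤ) - 1) * (Upoly k).comp (X - 1) = -((k : Polynomial ℤ) + 1 - X) * Upoly k := by
  induction k with
  | zero => simp [Upoly_zero]
  | succ k ih =>
      rw [Upoly_succ]
      simp only [mul_comp, add_comp, sub_comp, one_comp, X_comp, natCast_comp, Nat.cast_add,
        Nat.cast_one]
      linear_combination ((X + (k : Polynomial ℤ)) * ((k : Polynomial ℤ) + 2 - X)) * ih

lemma Upoly_term (k : ℕ) :
    X * (Upoly (k+1)).comp (X + 1) - (2*X - 1) * Upoly (k+1)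
      + (X - 1) * (Upoly (k+1)).comp (X - 1)
    = -(2*(2*X - 1)*((k : Polynomial ℤ)+1)^2) * Upoly k := by
  have ha := Upoly_comp_add k
  have hb := Upoly_comp_sub k
  rw [Upoly_succ]
  simp only [mul_comp, add_comp, sub_comp, one_comp, X_comp, natCast_comp]
  linear_combination (X * (X + 1 + (k : Polynomial ℤ))) * ha
    + ((X - 1) * ((k : Polynomial ℤ) + 2 - X)) * hb

section EvalRing
variable {S : Type*} [CommRing S]

/-- evaluated `U` in a commutative ring -/
def uS (k : ℕ) (r : S) : S := ∏ i ∈ Finset.range k, ((r + i) * (1 - r + i))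

lemma aeval_Upoly (k : ℕ) (r : S) : Polynomial.aeval r (Upoly k) = uS k r := by
  simp [Upoly, uS, map_prod]

lemma uS_term (k : ℕ) (r : S) :
    r * uS (k+1) (r+1) - (2*r - 1) * uS (k+1) r + (r-1) * uS (k+1) (r-1)
      = -(2*(2*r - 1)*((k : S)+1)^2) * uS k r := by
  have h := congrArg (Polynomial.aeval r) (Upoly_term k)
  simpa [aeval_comp, aeval_Upoly, map_ofNat] using h

end EvalRing

/-- `W k = (p-1)!/k!` -/
def Wfac (p k : ℕ) : ℕ := (p-1).factorial / k.factorial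

lemma Wfac_mul {p k : ℕ} (hk : k ≤ p - 1) : k.factorial * Wfac p k = (p-1).factorial :=
  Nat.mul_div_cancel' (Nat.factorial_dvd_factorial hk)

lemma Wfac_succ {p k : ℕ} (hk : k + 1 ≤ p - 1) : (k+1) * Wfac p (k+1) = Wfac p k := by
  have h1 : k.factorial * ((k+1) * Wfac p (k+1)) = k.factorial * Wfac p k := by
    rw [Wfac_mul (le_of_lt (Nat.lt_of_lt_of_le (Nat.lt_succ_self k) hk)), ← Wfac_mul hk]
    · rw [show k.factorial * ((k+1) * Wfac p (k+1)) = (k+1) * k.factorial * Wfac p (k+1) by ring,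
        ← Nat.factorial_succ, Wfac_mul hk]
  exact Nat.eq_of_mul_eq_mul_left k.factorial_pos h1

section EvalRing2
variable {S : Type*} [CommRing S]

/-- evaluated `G` -/
def GS (p : ℕ) (r : S) : S := ∑ k ∈ Finset.range p, (Wfac p k : S)^2 * uS k r

lemma GS_expand (m : ℕ) (s : S) :
    GS (m+1) s = (Wfac (m+1) 0 : S)^2
      + ∑ k ∈ Finset.range m, (Wfac (m+1) (k+1) : S)^2 * uS (k+1) s := by
  rw [GS, Finset.sum_range_succ']
  simp [uS, add_comm]

lemma GS_rec (m : ℕ) (r : S) :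
    r * GS (m+1) (r+1) + (2*r-1) * GS (m+1) r + (r-1) * GS (m+1) (r-1)
      = 2*(2*r-1) * ((Wfac (m+1) m : S)^2 * uS m r) := by
  have key : ∀ k ∈ Finset.range m,
      r * ((Wfac (m+1) (k+1) : S)^2 * uS (k+1) (r+1))
        + (2*r-1) * ((Wfac (m+1) (k+1) : S)^2 * uS (k+1) r)
        + (r-1) * ((Wfac (m+1) (k+1) : S)^2 * uS (k+1) (r-1))
      = 2*(2*r-1) * ((Wfac (m+1) (k+1) : S)^2 * uS (k+1) r
          - (Wfac (m+1) k : S)^2 * uS k r) := by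
    intro k hk
    have ht := uS_term k r
    have hw : ((k:S)+1) * (Wfac (m+1) (k+1) : S) = (Wfac (m+1) k : S) := by
      have := Wfac_succ (p := m+1) (k := k) (by simpa using Finset.mem_range.mp hk)
      exact_mod_cast congrArg (Nat.cast : ℕ → S) this
    have hw2 : (((k:S)+1) * (Wfac (m+1) (k+1) : S))^2 = ((Wfac (m+1) k : S))^2 := by
      rw [hw]
    linear_combination ((Wfac (m+1) (k+1) : S)^2) * ht - 2*(2*r-1)* uS k r * hw2
  have hsum := Finset.sum_congr rfl key
  have htel : ∑ k ∈ Finset.range m,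
      ((Wfac (m+1) (k+1) : S)^2 * uS (k+1) r - (Wfac (m+1) k : S)^2 * uS k r)
      = (Wfac (m+1) m : S)^2 * uS m r - (Wfac (m+1) 0 : S)^2 * uS 0 r :=
    Finset.sum_range_sub (fun k => (Wfac (m+1) k : S)^2 * uS k r) m
  rw [GS_expand, GS_expand, GS_expand]
  have h0 : uS 0 r = (1 : S) := by simp [uS]
  calc r * ((Wfac (m+1) 0 : S)^2 + ∑ k ∈ Finset.range m, (Wfac (m+1) (k+1) : S)^2 * uS (k+1) (r+1))
        + (2*r-1) * ((Wfac (m+1) 0 : S)^2 + ∑ k ∈ Finset.range m, (Wfac (m+1) (k+1) : S)^2 * uS (k+1) r)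
        + (r-1) * ((Wfac (m+1) 0 : S)^2 + ∑ k ∈ Finset.range m, (Wfac (m+1) (k+1) : S)^2 * uS (k+1) (r-1))
      = (4*r-2) * (Wfac (m+1) 0 : S)^2
        + ∑ k ∈ Finset.range m,
            (r * ((Wfac (m+1) (k+1) : S)^2 * uS (k+1) (r+1))
              + (2*r-1) * ((Wfac (m+1) (k+1) : S)^2 * uS (k+1) r)
              + (r-1) * ((Wfac (m+1) (k+1) : S)^2 * uS (k+1) (r-1))) := by
        rw [Finset.sum_add_distrib, Finset.sum_add_distrib, ← Finset.mul_sum, ← Finset.mul_sum,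
          ← Finset.mul_sum]
        ring
    _ = (4*r-2) * (Wfac (m+1) 0 : S)^2
        + 2*(2*r-1) * ((Wfac (m+1) m : S)^2 * uS m r - (Wfac (m+1) 0 : S)^2 * uS 0 r) := by
        rw [hsum, ← Finset.mul_sum, htel]
    _ = 2*(2*r-1) * ((Wfac (m+1) m : S)^2 * uS m r) := by rw [h0]; ring

end EvalRing2

lemma prod_shift1 (k : ℕ) : ∏ i ∈ Finset.range k, (i+1) = k.factorial := by
  induction k with
  | zero => simp
  | succ k ih => rw [Finset.prod_range_succ, ih, Nat.factorial_succ]; ring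

lemma prod_shift2 (k : ℕ) : ∏ i ∈ Finset.range k, (i+2) = (k+1).factorial := by
  have h := prod_shift1 (k+1)
  rw [Finset.prod_range_succ'] at h
  simpa using h


lemma prod_cast_fact {S : Type*} [CommRing S] (k : ℕ) :
    (∏ i ∈ Finset.range k, (((i:S)+1) * ((i:S)+2))) = (k.factorial : S) * ((k+1).factorial : S) := by
  have hn : (∏ i ∈ Finset.range k, ((i+1)*(i+2)) : ℕ) = k.factorial * (k+1).factorial := by
    rw [Finset.prod_mul_distrib, prod_shift1, prod_shift2]
  rw [← Nat.cast_mul, ← hn]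
  push_cast
  rfl

section TauRing
variable {S : Type*} [CommRing S]

lemma tau_prod (τ : S) (hτ : τ * τ = 0) (s : Finset ℕ) (f g : ℕ → S) :
    τ * ∏ i ∈ s, (f i + τ * g i) = τ * ∏ i ∈ s, f i := by
  induction s using Finset.induction_on with
  | empty => simp
  | @insert a s ha ih =>
      rw [Finset.prod_insert ha, Finset.prod_insert ha]
      linear_combination (f a + τ * g a) * ih + (g a * ∏ i ∈ s, f i) * hτ

lemma uS_tau (τ : S) (hτ : τ * τ = 0) (k : ℕ) :
    uS (k+1) τ = τ * ((k.factorial : S) * ((k+1).factorial : S)) := by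
  rw [uS, Finset.prod_range_succ']
  have h1 : ∀ i : ℕ, (τ + ((i+1 : ℕ) : S)) * (1 - τ + ((i+1:ℕ) : S))
      = (((i:S)+1) * ((i:S)+2)) + τ * (1 - τ) := by
    intro i; push_cast; ring
  have h2 : (τ + ((0:ℕ):S)) * (1 - τ + ((0:ℕ):S)) = τ - τ*τ := by push_cast; ring
  rw [h2, hτ, sub_zero]
  calc (∏ i ∈ Finset.range k, ((τ + ((i+1:ℕ):S)) * (1 - τ + ((i+1:ℕ):S)))) * τ
      = τ * ∏ i ∈ Finset.range k, ((((i:S)+1) * ((i:S)+2)) + τ * (1 - τ)) := by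
        rw [mul_comm]; congr 1; exact Finset.prod_congr rfl fun i _ => h1 i
    _ = τ * ∏ i ∈ Finset.range k, (((i:S)+1) * ((i:S)+2)) := by
        exact tau_prod τ hτ _ _ _
    _ = τ * ((k.factorial : S) * ((k+1).factorial : S)) := by
        rw [prod_cast_fact]

lemma uS_one_tau (τ : S) (hτ : τ * τ = 0) (k : ℕ) :
    uS (k+1) (1+τ) = -(τ * ((k.factorial : S) * ((k+1).factorial : S))) := by
  rw [uS, Finset.prod_range_succ']
  have h1 : ∀ i : ℕ, ((1+τ) + ((i+1 : ℕ) : S)) * (1 - (1+τ) + ((i+1:ℕ) : S))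
      = (((i:S)+1) * ((i:S)+2)) + τ * (-1 - τ) := by
    intro i; push_cast; ring
  have h2 : ((1+τ) + ((0:ℕ):S)) * (1 - (1+τ) + ((0:ℕ):S)) = -τ - τ*τ := by push_cast; ring
  rw [h2, hτ, sub_zero]
  calc (∏ i ∈ Finset.range k, (((1+τ) + ((i+1:ℕ):S)) * (1 - (1+τ) + ((i+1:ℕ):S)))) * (-τ)
      = -(τ * ∏ i ∈ Finset.range k, ((((i:S)+1) * ((i:S)+2)) + τ * (-1 - τ))) := by
        rw [show (∏ i ∈ Finset.range k, (((1+τ) + ((i+1:ℕ):S)) * (1 - (1+τ) + ((i+1:ℕ):S))))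
            = ∏ i ∈ Finset.range k, ((((i:S)+1) * ((i:S)+2)) + τ * (-1 - τ)) from
          Finset.prod_congr rfl fun i _ => h1 i]
        ring
    _ = -(τ * ∏ i ∈ Finset.range k, (((i:S)+1) * ((i:S)+2))) := by
        rw [tau_prod τ hτ _ _ _]
    _ = -(τ * ((k.factorial : S) * ((k+1).factorial : S))) := by
        rw [prod_cast_fact]

end TauRing

section Harmonic

lemma sum_inv_zmod (p : ℕ) [hF : Fact p.Prime] (hodd : p ≠ 2) :
    ∑ k ∈ Finset.range (p-1), ((k+1 : ℕ) : ZMod p)⁻¹ = 0 := by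
  have hS := Finset.sum_range_reflect (fun k => ((k+1:ℕ) : ZMod p)⁻¹) (p-1)
  have hcongr : ∀ j ∈ Finset.range (p-1),
      ((p - 1 - 1 - j + 1 : ℕ) : ZMod p)⁻¹ = (-((j+1 : ℕ) : ZMod p))⁻¹ := by
    intro j hj
    have hj' := Finset.mem_range.mp hj
    have h1 : p - 1 - 1 - j + 1 = p - (j+1) := by omega
    have h2 : ((p - (j+1) : ℕ) : ZMod p) = -((j+1:ℕ) : ZMod p) := by
      have hle : j + 1 ≤ p := by omega
      rw [Nat.cast_sub hle]
      simp
    rw [h1, h2]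
  rw [Finset.sum_congr rfl hcongr] at hS
  have hS2 : ∑ j ∈ Finset.range (p-1), (-((j+1 : ℕ) : ZMod p))⁻¹
      = - ∑ j ∈ Finset.range (p-1), ((j+1 : ℕ) : ZMod p)⁻¹ := by
    rw [← Finset.sum_neg_distrib]
    exact Finset.sum_congr rfl fun j _ => by rw [inv_neg]
  rw [hS2] at hS
  have h2ne : (2 : ZMod p) ≠ 0 := by
    have : ((2:ℕ) : ZMod p) ≠ 0 := by
      rw [Ne, ZMod.natCast_eq_zero_iff]
      intro h
      have := Nat.le_of_dvd (by norm_num) h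
      have := hF.out.two_le
      interval_cases p <;> simp_all
    simpa using this
  have : (2 : ZMod p) * ∑ j ∈ Finset.range (p-1), ((j+1 : ℕ) : ZMod p)⁻¹ = 0 := by
    linear_combination - hS
  rcases mul_eq_zero.mp this with h | h
  · exact absurd h h2ne
  · exact h

lemma p_dvd_harmonic (p : ℕ) (hp : p.Prime) (hp5 : 5 ≤ p) :
    p ∣ ∑ k ∈ Finset.range (p-1), (p-1).factorial / (k+1) := by
  haveI : Fact p.Prime := ⟨hp⟩
  rw [← ZMod.natCast_eq_zero_iff]
  push_cast
  have hterm : ∀ k ∈ Finset.range (p-1),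
      (((p-1).factorial / (k+1) : ℕ) : ZMod p)
        = ((p-1).factorial : ZMod p) * ((k+1:ℕ) : ZMod p)⁻¹ := by
    intro k hk
    have hk' := Finset.mem_range.mp hk
    have hdvd : (k+1) ∣ (p-1).factorial := Nat.dvd_factorial (Nat.succ_pos k) (by omega)
    have hne : ((k+1:ℕ) : ZMod p) ≠ 0 := by
      rw [Ne, ZMod.natCast_eq_zero_iff]
      intro h
      have := Nat.le_of_dvd (Nat.succ_pos k) h
      omega
    rw [eq_mul_inv_iff_mul_eq₀ hne, ← Nat.cast_mul, Nat.div_mul_cancel hdvd]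
  rw [Finset.sum_congr rfl hterm, ← Finset.mul_sum, sum_inv_zmod p (by omega), mul_zero]

end Harmonic

section GSValues
variable {S : Type*} [CommRing S]

lemma GS_at_tau (p : ℕ) (hp : 1 ≤ p) (τ : S) (hτ : τ*τ = 0) :
    GS p τ = (((p-1).factorial : S))^2
      + τ * ((∑ k ∈ Finset.range (p-1),
          Wfac p (k+1)^2 * (k.factorial * (k+1).factorial) : ℕ) : S) := by
  obtain ⟨m, rfl⟩ : ∃ m, p = m + 1 := ⟨p - 1, by omega⟩
  rw [GS_expand]
  have h0 : Wfac (m+1) 0 = m.factorial := by simp [Wfac]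
  have hsum : ∑ k ∈ Finset.range m, (Wfac (m+1) (k+1) : S)^2 * uS (k+1) τ
      = τ * ((∑ k ∈ Finset.range m,
          Wfac (m+1) (k+1)^2 * (k.factorial * (k+1).factorial) : ℕ) : S) := by
    push_cast
    rw [Finset.mul_sum]
    refine Finset.sum_congr rfl fun k _ => ?_
    rw [uS_tau τ hτ k]
    ring
  rw [hsum, h0]
  simp

lemma GS_at_one_tau (p : ℕ) (hp : 1 ≤ p) (τ : S) (hτ : τ*τ = 0) :
    GS p (1+τ) = (((p-1).factorial : S))^2
      - τ * ((∑ k ∈ Finset.range (p-1),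
          Wfac p (k+1)^2 * (k.factorial * (k+1).factorial) : ℕ) : S) := by
  obtain ⟨m, rfl⟩ : ∃ m, p = m + 1 := ⟨p - 1, by omega⟩
  rw [GS_expand]
  have h0 : Wfac (m+1) 0 = m.factorial := by simp [Wfac]
  have hsum : ∑ k ∈ Finset.range m, (Wfac (m+1) (k+1) : S)^2 * uS (k+1) (1+τ)
      = - (τ * ((∑ k ∈ Finset.range m,
          Wfac (m+1) (k+1)^2 * (k.factorial * (k+1).factorial) : ℕ) : S)) := by
    push_cast
    rw [Finset.mul_sum, ← Finset.sum_neg_distrib]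
    refine Finset.sum_congr rfl fun k _ => ?_
    rw [uS_one_tau τ hτ k]
    ring
  rw [hsum, h0]
  simp
  ring

lemma bigC_eq (p : ℕ) (hp : 1 ≤ p) :
    ∑ k ∈ Finset.range (p-1), Wfac p (k+1)^2 * (k.factorial * (k+1).factorial)
      = (p-1).factorial * ∑ k ∈ Finset.range (p-1), (p-1).factorial / (k+1) := by
  rw [Finset.mul_sum]
  refine Finset.sum_congr rfl fun k hk => ?_
  have hk' := Finset.mem_range.mp hk
  have h1 : (k+1).factorial * Wfac p (k+1) = (p-1).factorial := Wfac_mul (by omega)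
  have h2 : (p-1).factorial / (k+1) = Wfac p (k+1) * k.factorial := by
    apply Nat.div_eq_of_eq_mul_left (Nat.succ_pos k)
    rw [← h1, Nat.factorial_succ, Nat.succ_eq_add_one]
    ring
  rw [h2]
  calc Wfac p (k+1)^2 * (k.factorial * (k+1).factorial)
      = ((k+1).factorial * Wfac p (k+1)) * (Wfac p (k+1) * k.factorial) := by ring
    _ = (p-1).factorial * (Wfac p (k+1) * k.factorial) := by rw [h1]

end GSValues

section ZModInduction
variable (p : ℕ)

lemma pp_zero : ((p : ZMod (p^2)) * (p : ZMod (p^2))) = 0 := by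
  have h : ((p^2 : ℕ) : ZMod (p^2)) = 0 := ZMod.natCast_self _
  push_cast at h
  linear_combination h

lemma uS_boundary (hp5 : 5 ≤ p) (t : ZMod (p^2)) (j : ℕ) (h2 : 2 ≤ j) (hj : j ≤ p - 2) :
    uS (p-1) ((j : ZMod (p^2)) + (p : ZMod (p^2))*t) = 0 := by
  have hpτ : (p : ZMod (p^2)) * ((p : ZMod (p^2)) * t) = 0 := by
    rw [← mul_assoc, pp_zero, zero_mul]
  have hττ : ((p : ZMod (p^2)) * t) * ((p : ZMod (p^2)) * t) = 0 := by
    calc (p:ZMod (p^2))*t*((p:ZMod (p^2))*t) = ((p:ZMod (p^2))*(p:ZMod (p^2)))*(t*t) := by ring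
      _ = 0 := by rw [pp_zero, zero_mul]
  have hi1 : p - j ∈ Finset.range (p-1) := Finset.mem_range.mpr (by omega)
  have hi2 : j - 1 ∈ Finset.range (p-1) := Finset.mem_range.mpr (by omega)
  rw [uS, Finset.prod_mul_distrib, ← Finset.mul_prod_erase _ _ hi1,
    ← Finset.mul_prod_erase _ _ hi2]
  have e1 : ((j : ZMod (p^2)) + (p : ZMod (p^2))*t + ((p - j : ℕ) : ZMod (p^2)))
      = (p:ZMod (p^2)) + (p : ZMod (p^2))*t := by
    have hc : ((p - j : ℕ) : ZMod (p^2)) = (p:ZMod (p^2)) - (j:ZMod (p^2)) := by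
      rw [Nat.cast_sub (by omega)]
    rw [hc]; ring
  have e2 : (1 - ((j : ZMod (p^2)) + (p : ZMod (p^2))*t) + ((j-1 : ℕ): ZMod (p^2)))
      = -((p : ZMod (p^2))*t) := by
    have hc : ((j - 1 : ℕ) : ZMod (p^2)) = (j:ZMod (p^2)) - 1 := by
      rw [Nat.cast_sub (by omega)]; simp
    rw [hc]; ring
  rw [e1, e2]
  have hzero : ((p:ZMod (p^2)) + (p : ZMod (p^2))*t) * (-((p : ZMod (p^2))*t)) = 0 := by
    linear_combination -hpτ - hττ
  calc ((p:ZMod (p^2)) + (p : ZMod (p^2))*t)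
        * (∏ i ∈ (Finset.range (p-1)).erase (p-j),
            ((j : ZMod (p^2)) + (p : ZMod (p^2))*t + (i:ZMod (p^2))))
        * ((-((p : ZMod (p^2))*t)) * (∏ i ∈ (Finset.range (p-1)).erase (j-1),
            (1 - ((j : ZMod (p^2)) + (p : ZMod (p^2))*t) + (i:ZMod (p^2)))))
      = (((p:ZMod (p^2)) + (p : ZMod (p^2))*t) * (-((p : ZMod (p^2))*t)))
        * ((∏ i ∈ (Finset.range (p-1)).erase (p-j),
            ((j : ZMod (p^2)) + (p : ZMod (p^2))*t + (i:ZMod (p^2))))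
          * (∏ i ∈ (Finset.range (p-1)).erase (j-1),
            (1 - ((j : ZMod (p^2)) + (p : ZMod (p^2))*t) + (i:ZMod (p^2))))) := by ring
    _ = 0 := by rw [hzero, zero_mul]

end ZModInduction

section BigInduction
variable (p : ℕ)

lemma pp_zero' : ((p : ZMod (p^2)) * (p : ZMod (p^2))) = 0 := pp_zero p

lemma uS_boundary' (hp5 : 5 ≤ p) (τ : ZMod (p^2)) (hττ : τ * τ = 0)
    (hpτ : (p : ZMod (p^2)) * τ = 0) (j : ℕ) (h2 : 2 ≤ j) (hj : j ≤ p - 2) :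
    uS (p-1) ((j : ZMod (p^2)) + τ) = 0 := by
  have hi1 : p - j ∈ Finset.range (p-1) := Finset.mem_range.mpr (by omega)
  have hi2 : j - 1 ∈ Finset.range (p-1) := Finset.mem_range.mpr (by omega)
  rw [uS, Finset.prod_mul_distrib, ← Finset.mul_prod_erase _ _ hi1,
    ← Finset.mul_prod_erase _ _ hi2]
  have e1 : ((j : ZMod (p^2)) + τ + ((p - j : ℕ) : ZMod (p^2))) = (p:ZMod (p^2)) + τ := by
    have hc : ((p - j : ℕ) : ZMod (p^2)) = (p:ZMod (p^2)) - (j:ZMod (p^2)) := by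
      rw [Nat.cast_sub (by omega)]
    rw [hc]; ring
  have e2 : (1 - ((j : ZMod (p^2)) + τ) + ((j-1 : ℕ): ZMod (p^2))) = -τ := by
    have hc : ((j - 1 : ℕ) : ZMod (p^2)) = (j:ZMod (p^2)) - 1 := by
      rw [Nat.cast_sub (by omega)]; simp
    rw [hc]; ring
  rw [e1, e2]
  have hzero : ((p:ZMod (p^2)) + τ) * (-τ) = 0 := by linear_combination -hpτ - hττ
  calc ((p:ZMod (p^2)) + τ)
        * (∏ i ∈ (Finset.range (p-1)).erase (p-j),
            ((j : ZMod (p^2)) + τ + (i:ZMod (p^2))))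
        * ((-τ) * (∏ i ∈ (Finset.range (p-1)).erase (j-1),
            (1 - ((j : ZMod (p^2)) + τ) + (i:ZMod (p^2)))))
      = (((p:ZMod (p^2)) + τ) * (-τ))
        * ((∏ i ∈ (Finset.range (p-1)).erase (p-j),
            ((j : ZMod (p^2)) + τ + (i:ZMod (p^2))))
          * (∏ i ∈ (Finset.range (p-1)).erase (j-1),
            (1 - ((j : ZMod (p^2)) + τ) + (i:ZMod (p^2))))) := by ring
    _ = 0 := by rw [hzero, zero_mul]

lemma GS_val_zmod (hp : p.Prime) (hp5 : 5 ≤ p) (τ : ZMod (p^2)) (hττ : τ * τ = 0)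
    (hpτ : (p : ZMod (p^2)) * τ = 0) :
    ∀ j : ℕ, 1 ≤ j → j ≤ p - 1 →
      GS p ((j : ZMod (p^2)) + τ)
        = (-1)^(j-1) * (((p-1).factorial : ZMod (p^2)))^2 := by
  have hCzero : τ * ((∑ k ∈ Finset.range (p-1),
      Wfac p (k+1)^2 * (k.factorial * (k+1).factorial) : ℕ) : ZMod (p^2)) = 0 := by
    obtain ⟨M, hM⟩ := p_dvd_harmonic p hp hp5
    rw [bigC_eq p (by omega), hM]
    push_cast
    linear_combination (((p-1).factorial : ZMod (p^2)) * (M : ZMod (p^2))) * hpτ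
  have base1 : GS p (1+τ) = (((p-1).factorial : ZMod (p^2)))^2 := by
    rw [GS_at_one_tau p (by omega) τ hττ, hCzero, sub_zero]
  have base0 : GS p τ = (((p-1).factorial : ZMod (p^2)))^2 := by
    rw [GS_at_tau p (by omega) τ hττ, hCzero, add_zero]
  have hone : (1-τ)*(1+τ) = 1 := by linear_combination -hττ
  have hp1 : p - 1 + 1 = p := by omega
  have hWlast : Wfac p (p-1) = 1 := by
    simp [Wfac, Nat.div_self (Nat.factorial_pos (p-1))]
  have hp2 : p - 2 + 1 = p - 1 := by omega
  have hu1 : uS (p-1) (1+τ)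
      = -(τ * (((p-2).factorial : ZMod (p^2)) * (((p-1).factorial : ZMod (p^2))))) := by
    have h := uS_one_tau τ hττ (p-2)
    rw [hp2] at h
    exact h
  have base2 : GS p (2+τ) = -(((p-1).factorial : ZMod (p^2)))^2 := by
    have hrec := GS_rec (p-1) ((1:ZMod (p^2))+τ)
    rw [hp1, hWlast] at hrec
    have ha1 : (1:ZMod (p^2))+τ+1 = 2+τ := by ring
    have ha2 : (1:ZMod (p^2))+τ-1 = τ := by ring
    rw [ha1, ha2, hu1, base1, base0] at hrec
    push_cast at hrec
    have hfacts : (p-1).factorial * (p-2).factorial * p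
        = (p-2).factorial * (p-1).factorial + (p-1).factorial^2 := by
      obtain ⟨q, rfl⟩ : ∃ q, p = q+2 := ⟨p-2, by omega⟩
      have e1 : q+2-1 = q+1 := by omega
      have e2 : q+2-2 = q := by omega
      rw [e1, e2, Nat.factorial_succ q]
      ring
    have hz : (2:ZMod (p^2)) * τ * ((((p-2).factorial : ZMod (p^2)))
        *(((p-1).factorial : ZMod (p^2))) + (((p-1).factorial : ZMod (p^2)))^2) = 0 := by
      have hc : (((p-2).factorial * (p-1).factorial + (p-1).factorial^2 : ℕ) : ZMod (p^2))
          = (((p-1).factorial * (p-2).factorial : ℕ): ZMod (p^2)) * (p:ZMod (p^2)) := by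
        rw [← hfacts]; push_cast; ring
      push_cast at hc
      linear_combination (2*τ)*hc
        + (2*(((p-1).factorial: ZMod (p^2)))*(((p-2).factorial: ZMod (p^2))))*hpτ
    have hG2 : (1+τ) * GS p (2+τ)
        = -((((p-1).factorial : ZMod (p^2)))^2 + τ*(((p-1).factorial : ZMod (p^2)))^2) := by
      linear_combination hrec - hz
        - (4*(((p-2).factorial : ZMod (p^2)))*(((p-1).factorial : ZMod (p^2))))*hττ
    calc GS p (2+τ) = ((1-τ)*(1+τ))*GS p (2+τ) := by rw [hone, one_mul]
      _ = (1-τ)*((1+τ)*GS p (2+τ)) := by ring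
      _ = (1-τ)*(-((((p-1).factorial : ZMod (p^2)))^2
            + τ*(((p-1).factorial : ZMod (p^2)))^2)) := by rw [hG2]
      _ = -(((p-1).factorial : ZMod (p^2)))^2 := by
          linear_combination (((p-1).factorial : ZMod (p^2)))^2*hττ
  intro j
  induction j using Nat.strong_induction_on with
  | _ j ih =>
    intro h1 hj
    match j, h1, hj with
    | 1, _, _ => simpa using base1
    | 2, _, _ => simpa using base2
    | (n+3), _, hj =>
      have hrec := GS_rec (p-1) (((n+2:ℕ):ZMod (p^2)) + τ)
      rw [hp1, hWlast] at hrec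
      have hb := uS_boundary' p hp5 τ hττ hpτ (n+2) (by omega) (by omega)
      rw [hb] at hrec
      have e1 : ((n+2:ℕ):ZMod (p^2)) + τ + 1 = ((n+3:ℕ):ZMod (p^2)) + τ := by
        push_cast; ring
      have e2 : ((n+2:ℕ):ZMod (p^2)) + τ - 1 = ((n+1:ℕ):ZMod (p^2)) + τ := by
        push_cast; ring
      rw [e1, e2] at hrec
      have ih1 : GS p (((n+2:ℕ):ZMod (p^2)) + τ)
          = (-1)^(n+1) * (((p-1).factorial : ZMod (p^2)))^2 := by
        have h := ih (n+2) (by omega) (by omega) (by omega)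
        rwa [show n+2-1 = n+1 from by omega] at h
      have ih2 : GS p (((n+1:ℕ):ZMod (p^2)) + τ)
          = (-1)^n * (((p-1).factorial : ZMod (p^2)))^2 := by
        have h := ih (n+1) (by omega) (by omega) (by omega)
        rwa [show n+1-1 = n from by omega] at h
      rw [ih1, ih2] at hrec
      have hunit : IsUnit ((n+2 : ℕ) : ZMod (p^2)) := by
        rw [ZMod.isUnit_iff_coprime]
        have hnd : ¬ p ∣ (n+2) := by
          intro hdvd
          have := Nat.le_of_dvd (by omega) hdvd
          omega
        exact (Nat.Coprime.pow_right 2 ((Nat.Prime.coprime_iff_not_dvd hp).mpr hnd).symm)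
      obtain ⟨u, hu⟩ := hunit
      have hc : ((n+2:ℕ):ZMod (p^2)) * (↑u⁻¹ : ZMod (p^2)) = 1 := by
        rw [← hu]; exact u.mul_inv
      have hinv : (((n+2:ℕ):ZMod (p^2)) + τ)
          * ((↑u⁻¹ : ZMod (p^2)) - (↑u⁻¹ : ZMod (p^2))*(↑u⁻¹ : ZMod (p^2))*τ) = 1 := by
        linear_combination (1 - (↑u⁻¹ : ZMod (p^2))*τ)*hc
          - (↑u⁻¹ : ZMod (p^2))*(↑u⁻¹ : ZMod (p^2))*hττ
      have hG : (((n+2:ℕ):ZMod (p^2))+τ) * GS p (((n+3:ℕ):ZMod (p^2))+τ)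
          = (((n+2:ℕ):ZMod (p^2))+τ) * ((-1)^(n+2) * (((p-1).factorial : ZMod (p^2)))^2) := by
        push_cast at hrec ⊢
        linear_combination hrec
      have hfin : GS p (((n+3:ℕ):ZMod (p^2))+τ)
          = (-1)^(n+2) * (((p-1).factorial : ZMod (p^2)))^2 := by
        calc GS p (((n+3:ℕ):ZMod (p^2))+τ)
            = ((((n+2:ℕ):ZMod (p^2)) + τ)
                * ((↑u⁻¹ : ZMod (p^2)) - (↑u⁻¹ : ZMod (p^2))*(↑u⁻¹ : ZMod (p^2))*τ))
              * GS p (((n+3:ℕ):ZMod (p^2))+τ) := by rw [hinv, one_mul]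
          _ = ((↑u⁻¹ : ZMod (p^2)) - (↑u⁻¹ : ZMod (p^2))*(↑u⁻¹ : ZMod (p^2))*τ)
              * ((((n+2:ℕ):ZMod (p^2))+τ) * GS p (((n+3:ℕ):ZMod (p^2))+τ)) := by ring
          _ = ((↑u⁻¹ : ZMod (p^2)) - (↑u⁻¹ : ZMod (p^2))*(↑u⁻¹ : ZMod (p^2))*τ)
              * ((((n+2:ℕ):ZMod (p^2))+τ)
                * ((-1)^(n+2) * (((p-1).factorial : ZMod (p^2)))^2)) := by rw [hG]
          _ = ((((n+2:ℕ):ZMod (p^2)) + τ)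
                * ((↑u⁻¹ : ZMod (p^2)) - (↑u⁻¹ : ZMod (p^2))*(↑u⁻¹ : ZMod (p^2))*τ))
              * ((-1)^(n+2) * (((p-1).factorial : ZMod (p^2)))^2) := by ring
          _ = (-1)^(n+2) * (((p-1).factorial : ZMod (p^2)))^2 := by rw [hinv, one_mul]
      rwa [show n+3-1 = n+2 from by omega]

end BigInduction


section Bridge

lemma GS_map {S S' : Type*} [CommRing S] [CommRing S'] (f : S →+* S') (p : ℕ) (r : S) :
    f (GS p r) = GS p (f r) := by
  simp [GS, uS, map_sum, map_mul, map_prod, map_natCast, map_add, map_sub, map_one, map_pow]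

end Bridge

/-- Rising factorial (Pochhammer symbol) `(x)_k = x(x+1)⋯(x+k-1)`. -/
def rise (x : ℚ) (k : ℕ) : ℚ := ∏ i ∈ Finset.range k, (x + i)

lemma GS_rat (p : ℕ) (hp : 1 ≤ p) (α : ℚ) :
    GS p α = ((p-1).factorial : ℚ)^2
      * ∑ k ∈ Finset.range p, rise α k * rise (1-α) k / ((k.factorial : ℚ))^2 := by
  rw [GS, Finset.mul_sum]
  refine Finset.sum_congr rfl fun k hk => ?_
  have hk' := Finset.mem_range.mp hk
  have hW : (k.factorial : ℚ) * (Wfac p k : ℚ) = ((p-1).factorial : ℚ) := by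
    exact_mod_cast congrArg (Nat.cast : ℕ → ℚ) (Wfac_mul (p := p) (k := k) (by omega))
  have hu : uS k α = rise α k * rise (1-α) k := by
    rw [uS, rise, rise, ← Finset.prod_mul_distrib]
  have hf : (k.factorial : ℚ) ≠ 0 := Nat.cast_ne_zero.mpr k.factorial_pos.ne'
  rw [hu]
  field_simp
  linear_combination (rise α k * rise (1-α) k * ((k.factorial:ℚ) * (Wfac p k : ℚ) + ((p-1).factorial : ℚ))) * hW


/-- Z.-W. Sun's congruence: for a prime `p ≥ 5` and a `p`-integral rational `α`
with least nonnegative residue `a = {α}_p ≥ 1`,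
`∑_{k=0}^{p-1} (α)_k (1-α)_k / (k!)² ≡ (-1)^{a-1} (mod p²)`. -/
theorem sun_2F1 (p : ℕ) (hp : p.Prime) (hp5 : 5 ≤ p)
    (α : ℚ) (hα : padicNorm p α ≤ 1)
    (a : ℕ) (h1a : 1 ≤ a) (hap : a < p) (hres : padicNorm p (α - a) ≤ ((p : ℚ))⁻¹) :
    padicNorm p
        ((∑ k ∈ Finset.range p, rise α k * rise (1 - α) k / ((k.factorial : ℚ))^2)
          - (-1 : ℚ)^(a - 1))
      ≤ ((p : ℚ)^2)⁻¹ := by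
  haveI : Fact p.Prime := ⟨hp⟩
  set Ssum : ℚ := ∑ k ∈ Finset.range p, rise α k * rise (1 - α) k / ((k.factorial : ℚ))^2
    with hSsum
  -- α is a p-adic integer
  have hα' : ‖(α : ℚ_[p])‖ ≤ 1 := by
    rw [Padic.eq_padicNorm]
    exact_mod_cast hα
  set A : ℤ_[p] := ⟨(α : ℚ_[p]), hα'⟩ with hA
  -- A ≡ a mod p
  have hAa : ‖A - (a : ℤ_[p])‖ ≤ (p : ℝ)^(-(1:ℕ) : ℤ) := by
    have hcoe : ((A - (a : ℤ_[p]) : ℤ_[p]) : ℚ_[p]) = ((α - a : ℚ) : ℚ_[p]) := by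
      push_cast [hA]
      rfl
    rw [PadicInt.norm_def, hcoe, Padic.eq_padicNorm]
    have : ((p:ℝ))^(-(1:ℕ):ℤ) = ((p:ℚ)⁻¹ : ℝ) := by
      push_cast
      simp [zpow_neg]
    rw [this]
    exact_mod_cast hres
  obtain ⟨B, hB⟩ : ((p : ℤ_[p]))^1 ∣ (A - (a : ℤ_[p])) := by
    rw [← Ideal.mem_span_singleton]
    exact (PadicInt.norm_le_pow_iff_mem_span_pow _ 1).mp hAa
  -- reduce mod p^2
  set φ : ℤ_[p] →+* ZMod (p^2) := PadicInt.toZModPow 2 with hφ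
  have hφA : φ A = (a : ZMod (p^2)) + (p : ZMod (p^2)) * φ B := by
    have hA' : A = (a : ℤ_[p]) + (p : ℤ_[p]) * B := by
      rw [pow_one] at hB
      linear_combination hB
    rw [hA', map_add, map_mul, map_natCast, map_natCast]
  have hττ : ((p : ZMod (p^2)) * φ B) * ((p : ZMod (p^2)) * φ B) = 0 := by
    calc (p:ZMod (p^2)) * φ B * ((p:ZMod (p^2)) * φ B)
        = ((p:ZMod (p^2))*(p:ZMod (p^2))) * (φ B * φ B) := by ring
      _ = 0 := by rw [pp_zero, zero_mul]
  have hpτ : (p : ZMod (p^2)) * ((p : ZMod (p^2)) * φ B) = 0 := by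
    rw [← mul_assoc, pp_zero, zero_mul]
  -- main congruence
  have hmain := GS_val_zmod p hp hp5 ((p : ZMod (p^2)) * φ B) hττ hpτ a h1a (by omega)
  set c : ℤ_[p] := (-1)^(a-1) * (((p-1).factorial : ℤ_[p]))^2 with hc
  have hker : φ (GS p A - c) = 0 := by
    rw [map_sub, GS_map, hφA, hmain, hc, map_mul, map_pow, map_pow, map_neg, map_one,
      map_natCast]
    ring
  have hnorm2 : ‖GS p A - c‖ ≤ (p : ℝ)^(-(2:ℕ) : ℤ) := by
    rw [PadicInt.norm_le_pow_iff_mem_span_pow, ← PadicInt.ker_toZModPow, RingHom.mem_ker]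
    exact hker
  -- back to ℚ
  set X : ℚ := GS p α - ((-1)^(a-1) * (((p-1).factorial : ℚ))^2) with hX
  have hXcoe : ((X : ℚ) : ℚ_[p]) = ((GS p A - c : ℤ_[p]) : ℚ_[p]) := by
    rw [hX, hc]
    push_cast
    have h1 : ((GS p α : ℚ) : ℚ_[p]) = GS p ((α : ℚ) : ℚ_[p]) := by
      have := GS_map (Rat.castHom ℚ_[p]) p α
      simpa using this
    have h2 : ((GS p A : ℤ_[p]) : ℚ_[p]) = GS p ((A : ℤ_[p]) : ℚ_[p]) := by
      have := GS_map (PadicInt.Coe.ringHom (p := p)) p A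
      exact this
    rw [h1, h2]
  have hXnorm : (padicNorm p X : ℝ) ≤ (p : ℝ)^(-(2:ℕ) : ℤ) := by
    rw [← Padic.eq_padicNorm, hXcoe, ← PadicInt.norm_def]
    exact hnorm2
  have hXq : padicNorm p X ≤ ((p : ℚ)^2)⁻¹ := by
    have hr : (p : ℝ)^(-(2:ℕ) : ℤ) = (((p:ℚ)^2)⁻¹ : ℝ) := by
      rw [zpow_neg, zpow_natCast]
      push_cast
      norm_num
    rw [hr] at hXnorm
    exact_mod_cast hXnorm
  -- relate X to the goal
  have hXfac : X = (((p-1).factorial : ℚ))^2 * (Ssum - (-1 : ℚ)^(a-1)) := by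
    rw [hX, GS_rat p (by omega) α, ← hSsum]
    ring
  have hfacnorm : padicNorm p ((((p-1).factorial : ℚ))^2) = 1 := by
    have hnd : ¬ p ∣ (p-1).factorial^2 := by
      intro h
      have := hp.dvd_of_dvd_pow h
      rw [Nat.Prime.dvd_factorial hp] at this
      omega
    have := (padicNorm.nat_eq_one_iff (p := p) ((p-1).factorial^2)).mpr hnd
    push_cast at this
    exact this
  have := padicNorm.mul (p := p) ((((p-1).factorial : ℚ))^2) (Ssum - (-1 : ℚ)^(a-1))
  rw [← hXfac, hfacnorm, one_mul] at this
  rw [← this]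
  exact hXq
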